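/- Let (g_k)_{k=1,...,N} be C¹ maps between open subsets of ℝⁿ with uniformly bounded composed differentials: ‖∂(g_{k+1}∘⋯∘g_l)/∂x(x)‖ ≤ C_D for all 0 ≤ k < l ≤ N and all admissible x. Suppose f_k are C¹ functions with ‖f_k‖_{C⁰} ≤ D_k, ‖f_k‖_{C¹} ≤ C uniformly, 1/C_D ≤ D_k ≤ C_D, and a sequence of C¹ functions satisfies a_N(x) = f_N(x)·a_{N-1}(g_N(x)) with a_0 = a. Then, with J_N = D_1⋯D_N, one has ‖a_N‖_{C⁰} ≤ J_N‖a‖_{C⁰} and ‖∂a_N‖_{C⁰} ≤ C'·J_N·(N+1)·‖a‖_{C¹}, with C' depending only on C, C_D. -/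

import Mathlib

/-- C⁰ and C¹ estimates for iterated symbols (Proposition 5.3): if
`a_N(x) = f_N(x)·a_{N-1}(g_N(x))` with `|f_k| ≤ D_k`, `‖∂f_k‖ ≤ C`, and all composed
Jacobians `∂(g_{k+1}∘⋯∘g_l)` bounded by `C_D`, then `|a_N| ≤ J_N‖a‖_{C⁰}` and
`‖∂a_N‖ ≤ C'·J_N·(N+1)·‖a‖_{C¹}` with `C'` depending only on `C, C_D`. -/
theorem stmt16 {d : ℕ} (C C_D A₀ A₁ : ℝ) (hC : 0 < C) (hCD : 1 ≤ C_D)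
    (g : ℕ → EuclideanSpace ℝ (Fin d) → EuclideanSpace ℝ (Fin d))
    (f : ℕ → EuclideanSpace ℝ (Fin d) → ℝ)
    (a : EuclideanSpace ℝ (Fin d) → ℝ)
    (D : ℕ → ℝ)
    (G : ℕ → ℕ → EuclideanSpace ℝ (Fin d) → EuclideanSpace ℝ (Fin d))
    (hgdiff : ∀ k, Differentiable ℝ (g k))
    (hfdiff : ∀ k, Differentiable ℝ (f k))
    (hadiff : Differentiable ℝ a)
    (hD : ∀ k, 1 ≤ k → 1 / C_D ≤ D k ∧ D k ≤ C_D)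
    (hf0 : ∀ k x, 1 ≤ k → |f k x| ≤ D k)
    (hf1 : ∀ k x, 1 ≤ k → ‖fderiv ℝ (f k) x‖ ≤ C)
    (hGid : ∀ l, G l l = id)
    (hGrec : ∀ k l, k < l → G k l = g (k + 1) ∘ G (k + 1) l)
    (hGlip : ∀ k l x, k ≤ l → ‖fderiv ℝ (G k l) x‖ ≤ C_D)
    (ha0 : ∀ x, |a x| ≤ A₀)
    (ha1 : ∀ x, ‖fderiv ℝ a x‖ ≤ A₁) (hA : A₀ ≤ A₁)
    (aa : ℕ → EuclideanSpace ℝ (Fin d) → ℝ)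
    (haa0 : aa 0 = a)
    (haarec : ∀ N, 1 ≤ N → ∀ x, aa N x = f N x * aa (N - 1) (g N x)) :
    (∀ N x, |aa N x| ≤ (∏ i ∈ Finset.Icc 1 N, D i) * A₀) ∧
    ∃ C' : ℝ, 0 < C' ∧ ∀ N x,
      ‖fderiv ℝ (aa N) x‖ ≤ C' * (∏ i ∈ Finset.Icc 1 N, D i) * ((N : ℝ) + 1) * A₁ := by
  have hCD0 : (0:ℝ) < C_D := lt_of_lt_of_le one_pos hCD
  have hA₀ : 0 ≤ A₀ := le_trans (abs_nonneg _) (ha0 0)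
  have hA₁ : 0 ≤ A₁ := le_trans (norm_nonneg _) (ha1 0)
  have hDpos : ∀ k, 1 ≤ k → 0 < D k := fun k hk =>
    lt_of_lt_of_le (by positivity) (hD k hk).1
  have hJpos : ∀ N, 0 < ∏ i ∈ Finset.Icc 1 N, D i := by
    intro N
    exact Finset.prod_pos fun i hi => hDpos i (Finset.mem_Icc.mp hi).1
  have hJrec : ∀ N, (∏ i ∈ Finset.Icc 1 (N+1), D i)
      = (∏ i ∈ Finset.Icc 1 N, D i) * D (N+1) := by
    intro N
    exact Finset.prod_Icc_succ_top (by omega) _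
  -- C⁰ estimate
  have hC0 : ∀ N x, |aa N x| ≤ (∏ i ∈ Finset.Icc 1 N, D i) * A₀ := by
    intro N
    induction N with
    | zero => intro x; simpa [haa0] using ha0 x
    | succ n ih =>
      intro x
      rw [haarec (n+1) (by omega) x, Nat.add_sub_cancel, abs_mul, hJrec]
      calc |f (n+1) x| * |aa n (g (n+1) x)|
          ≤ D (n+1) * ((∏ i ∈ Finset.Icc 1 n, D i) * A₀) :=
            mul_le_mul (hf0 _ x (by omega)) (ih _) (abs_nonneg _)
              (le_of_lt (hDpos _ (by omega)))
        _ = (∏ i ∈ Finset.Icc 1 n, D i) * D (n+1) * A₀ := by ring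
  -- differentiability of aa N
  have haadiff : ∀ N, Differentiable ℝ (aa N) := by
    intro N
    induction N with
    | zero => rw [haa0]; exact hadiff
    | succ n ih =>
      have h : aa (n+1) = fun x => f (n+1) x * aa n (g (n+1) x) := by
        funext x
        rw [haarec (n+1) (by omega) x, Nat.add_sub_cancel]
      rw [h]
      exact (hfdiff _).mul (ih.comp (hgdiff _))
  -- differentiability of G
  have hGdiffaux : ∀ n k, Differentiable ℝ (G k (k+n)) := by
    intro n
    induction n with
    | zero => intro k; rw [Nat.add_zero, hGid]; exact differentiable_id
    | succ m ih =>
      intro k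
      rw [show k+(m+1) = (k+1)+m from by omega, hGrec k ((k+1)+m) (by omega)]
      exact (hgdiff (k+1)).comp (ih (k+1))
  have hGdiff : ∀ k l, k ≤ l → Differentiable ℝ (G k l) := by
    intro k l h
    obtain ⟨n, rfl⟩ := Nat.exists_eq_add_of_le h
    exact hGdiffaux n k
  -- key C¹ estimate via composed maps
  have key : ∀ N M, N ≤ M → ∀ x,
      ‖fderiv ℝ (aa N ∘ G N M) x‖
        ≤ (C*C_D^2*(N:ℝ) + C_D) * (∏ i ∈ Finset.Icc 1 N, D i) * A₁ := by
    intro N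
    induction N with
    | zero =>
      intro M hM x
      have hcomp : aa 0 ∘ G 0 M = a ∘ G 0 M := by rw [haa0]
      rw [hcomp, fderiv_comp x (hadiff _) ((hGdiff 0 M hM) x)]
      calc ‖(fderiv ℝ a (G 0 M x)).comp (fderiv ℝ (G 0 M) x)‖
          ≤ ‖fderiv ℝ a (G 0 M x)‖ * ‖fderiv ℝ (G 0 M) x‖ :=
            ContinuousLinearMap.opNorm_comp_le _ _
        _ ≤ A₁ * C_D := mul_le_mul (ha1 _) (hGlip 0 M x hM) (norm_nonneg _) hA₁
        _ ≤ (C*C_D^2*(0:ℕ) + C_D) * (∏ i ∈ Finset.Icc 1 0, D i) * A₁ := by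
            simp; nlinarith
    | succ n ih =>
      intro M hM x
      have hnM : n < M := by omega
      have heq : aa (n+1) ∘ G (n+1) M
          = fun y => f (n+1) (G (n+1) M y) * (aa n ∘ G n M) y := by
        funext y
        simp only [Function.comp_apply]
        rw [haarec (n+1) (by omega), Nat.add_sub_cancel]
        congr 1
        rw [hGrec n M hnM]
        rfl
      set u : EuclideanSpace ℝ (Fin d) → ℝ := fun y => f (n+1) (G (n+1) M y) with hu
      have hudiff : Differentiable ℝ u := (hfdiff _).comp (hGdiff (n+1) M hM)
      have hvdiff : Differentiable ℝ (aa n ∘ G n M) :=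
        (haadiff n).comp (hGdiff n M (le_of_lt hnM))
      rw [heq, fderiv_fun_mul (hudiff x) (hvdiff x)]
      have hub : ‖fderiv ℝ u x‖ ≤ C * C_D := by
        rw [hu, show (fun y => f (n+1) (G (n+1) M y)) = f (n+1) ∘ G (n+1) M from rfl,
          fderiv_comp x ((hfdiff (n+1)) _) ((hGdiff (n+1) M hM) x)]
        calc ‖(fderiv ℝ (f (n+1)) (G (n+1) M x)).comp (fderiv ℝ (G (n+1) M) x)‖
            ≤ ‖fderiv ℝ (f (n+1)) (G (n+1) M x)‖ * ‖fderiv ℝ (G (n+1) M) x‖ :=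
              ContinuousLinearMap.opNorm_comp_le _ _
          _ ≤ C * C_D := mul_le_mul (hf1 _ _ (by omega)) (hGlip _ M x hM)
              (norm_nonneg _) (le_of_lt hC)
      have huval : |u x| ≤ D (n+1) := hf0 _ _ (by omega)
      have hvval : |(aa n ∘ G n M) x| ≤ (∏ i ∈ Finset.Icc 1 n, D i) * A₀ := hC0 n _
      have hib := ih M (le_of_lt hnM) x
      set J : ℝ := ∏ i ∈ Finset.Icc 1 n, D i with hJ
      have hJp : 0 < J := hJpos n
      have hDn : 1/C_D ≤ D (n+1) ∧ D (n+1) ≤ C_D := hD (n+1) (by omega)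
      have hDnp : 0 < D (n+1) := hDpos _ (by omega)
      calc ‖u x • fderiv ℝ (aa n ∘ G n M) x + (aa n ∘ G n M) x • fderiv ℝ u x‖
          ≤ ‖u x • fderiv ℝ (aa n ∘ G n M) x‖ + ‖(aa n ∘ G n M) x • fderiv ℝ u x‖ :=
            norm_add_le _ _
        _ = |u x| * ‖fderiv ℝ (aa n ∘ G n M) x‖ + |(aa n ∘ G n M) x| * ‖fderiv ℝ u x‖ := by
            rw [norm_smul, norm_smul]; rfl
        _ ≤ D (n+1) * ((C*C_D^2*(n:ℝ) + C_D) * J * A₁) + (J * A₀) * (C * C_D) := by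
            apply add_le_add
            · exact mul_le_mul huval hib (norm_nonneg _) (le_of_lt hDnp)
            · exact mul_le_mul hvval hub (norm_nonneg _)
                (le_trans (abs_nonneg _) hvval)
        _ ≤ (C*C_D^2*((n:ℝ)+1) + C_D) * (∏ i ∈ Finset.Icc 1 (n+1), D i) * A₁ := by
            rw [hJrec, ← hJ]
            have h1 : J ≤ C_D * (J * D (n+1)) := by
              have h0 : (1:ℝ) ≤ C_D * D (n+1) := by
                have := hDn.1
                rw [div_le_iff₀ hCD0] at this
                nlinarith
              nlinarith
            have h3 : (J * A₀) * (C * C_D) ≤ C*C_D^2*(J*D (n+1))*A₁ := by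
              nlinarith [mul_le_mul_of_nonneg_left h1 (show (0:ℝ) ≤ C*C_D*A₁ by positivity),
                mul_le_mul_of_nonneg_left hA (show (0:ℝ) ≤ J*(C*C_D) by positivity)]
            have expand : (C*C_D^2*((n:ℝ)+1)+C_D)*(J*D (n+1))*A₁
                = D (n+1)*((C*C_D^2*(n:ℝ)+C_D)*J*A₁) + C*C_D^2*(J*D (n+1))*A₁ := by ring
            rw [expand]
            exact add_le_add le_rfl h3
        _ = (C*C_D^2*((n+1:ℕ):ℝ) + C_D) * (∏ i ∈ Finset.Icc 1 (n+1), D i) * A₁ := by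
            push_cast; ring
  refine ⟨hC0, C*C_D^2 + C_D, by positivity, ?_⟩
  intro N x
  have h := key N N le_rfl x
  rw [hGid N, Function.comp_id] at h
  refine le_trans h ?_
  have hJp := hJpos N
  have hN : (0:ℝ) ≤ (N:ℝ) := Nat.cast_nonneg N
  have hmain : (C*C_D^2*(N:ℝ) + C_D) ≤ (C*C_D^2 + C_D) * ((N:ℝ)+1) := by nlinarith
  calc (C*C_D^2*(N:ℝ) + C_D) * (∏ i ∈ Finset.Icc 1 N, D i) * A₁
      ≤ (C*C_D^2 + C_D) * ((N:ℝ)+1) * (∏ i ∈ Finset.Icc 1 N, D i) * A₁ := by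
        apply mul_le_mul_of_nonneg_right _ hA₁
        exact mul_le_mul_of_nonneg_right hmain (le_of_lt hJp)
    _ = (C*C_D^2 + C_D) * (∏ i ∈ Finset.Icc 1 N, D i) * ((N:ℝ)+1) * A₁ := by ring
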